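/- Let r, r̄, h, r_τ be as in the strongly adapted convexity setup (X·ln h = r̄ − r, h > 0, r_τ = ((1−τ)r + τh r̄)/((1−τ)+τh)). If r² + X·r > −r and r̄² + X·r̄ > −r̄ pointwise, then r_τ² + X·r_τ > −r_τ pointwise for all τ ∈ [0,1]. -/
import Mathlib

/- STATEMENT 11: With X·ln h = r̄ − r, h > 0, r_τ = ((1−τ)r + τh r̄)/((1−τ)+τh):
if r² + X·r > −r and r̄² + X·r̄ > −r̄ pointwise, then r_τ² + X·r_τ > −r_τ pointwise for every
τ ∈ [0,1]. -/
theorem stmt11 {M : Type*}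
    (D : (M → ℝ) →ₗ[ℝ] (M → ℝ))
    (leibniz : ∀ f g : M → ℝ, D (f * g) = f * D g + D f * g)
    (r rb h : M → ℝ) (hh : ∀ p, 0 < h p)
    (hln : D h = h * (rb - r))
    (τ : ℝ) (hτ : τ ∈ Set.Icc (0:ℝ) 1)
    (rτ : M → ℝ)
    (hrτ : ∀ p, rτ p = ((1 - τ) * r p + τ * h p * rb p) / ((1 - τ) + τ * h p))
    (hstr : ∀ p, -(r p) < (r p) ^ 2 + D r p)
    (hstrb : ∀ p, -(rb p) < (rb p) ^ 2 + D rb p) :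
    ∀ p, -(rτ p) < (rτ p) ^ 2 + D rτ p := by
  obtain ⟨hτ0, hτ1⟩ := hτ
  have hd : ∀ p, 0 < (1 - τ) + τ * h p := by
    intro p
    rcases eq_or_lt_of_le hτ1 with h1 | h1
    · subst h1; simpa using hh p
    · have : 0 ≤ τ * h p := mul_nonneg hτ0 (hh p).le
      linarith
  have hD1 : D (1 : M → ℝ) = 0 := by
    have h2 : D 1 = D 1 + D 1 := by simpa using leibniz 1 1
    exact (left_eq_add.mp h2)
  have hDc : ∀ c : ℝ, D (fun _ => c) = 0 := by
    intro c
    have : (fun _ : M => c) = c • (1 : M → ℝ) := by funext p; simp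
    rw [this, map_smul, hD1, smul_zero]
  -- denominator and numerator as functions
  set d : M → ℝ := (fun _ => (1 - τ)) + τ • h with hdef
  set N : M → ℝ := (1 - τ) • r + τ • (h * rb) with hNdef
  have hmul : rτ * d = N := by
    funext p
    have hdp : d p = (1 - τ) + τ * h p := by simp [hdef]
    have : rτ p * d p = N p := by
      rw [hdp, hrτ p]
      rw [div_mul_cancel₀ _ (hd p).ne']
      simp [hNdef]
      ring
    simpa using this
  have hDd : D d = τ • (h * (rb - r)) := by
    rw [hdef, map_add, map_smul, hDc, hln, zero_add]
  have hDN : D N = (1 - τ) • D r + τ • (h * D rb + (h * (rb - r)) * rb) := by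
    rw [hNdef, map_add, map_smul, map_smul, leibniz h rb, hln]
  have key : ∀ p, rτ p * D d p + D rτ p * d p = D N p := by
    intro p
    have := congrFun ((leibniz rτ d).symm.trans (congrArg D hmul)) p
    simpa using this
  intro p
  have hdp : d p = (1 - τ) + τ * h p := by simp [hdef]
  have hk := key p
  rw [hDd, hDN] at hk
  simp only [Pi.smul_apply, Pi.add_apply, Pi.mul_apply, Pi.sub_apply, smul_eq_mul] at hk
  rw [hdp] at hk
  set A := r p
  set B := rb p
  set H := h p
  set dR := D r p
  set dB := D rb p
  set dT := D rτ p
  have hrt : rτ p = ((1 - τ) * A + τ * H * B) / ((1 - τ) + τ * H) := hrτ p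
  have hdP : (0:ℝ) < (1 - τ) + τ * H := hd p
  have hSA : -A < A ^ 2 + dR := hstr p
  have hSB : -B < B ^ 2 + dB := hstrb p
  have hHp : 0 < H := hh p
  -- clear the division
  have hrt' : rτ p * ((1 - τ) + τ * H) = (1 - τ) * A + τ * H * B := by
    rw [hrt, div_mul_cancel₀ _ hdP.ne']
  set RT := rτ p
  -- coefficients
  have hc1 : 0 ≤ (1 - τ) ^ 2 + τ * (1 - τ) * H := by
    have := mul_nonneg (mul_nonneg hτ0 (by linarith : (0:ℝ) ≤ 1 - τ)) hHp.le
    nlinarith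
  have hc2 : 0 ≤ τ ^ 2 * H ^ 2 + τ * (1 - τ) * H := by
    have := mul_nonneg (mul_nonneg hτ0 (by linarith : (0:ℝ) ≤ 1 - τ)) hHp.le
    nlinarith
  have hpos : 0 < ((1 - τ) ^ 2 + τ * (1 - τ) * H) * (A ^ 2 + dR + A)
      + (τ ^ 2 * H ^ 2 + τ * (1 - τ) * H) * (B ^ 2 + dB + B) := by
    rcases eq_or_lt_of_le hc1 with h1 | h1
    · have hsum : ((1 - τ) ^ 2 + τ * (1 - τ) * H) + (τ ^ 2 * H ^ 2 + τ * (1 - τ) * H)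
          = ((1 - τ) + τ * H) ^ 2 := by ring
      have h2 : 0 < τ ^ 2 * H ^ 2 + τ * (1 - τ) * H := by nlinarith
      nlinarith
    · nlinarith
  -- main identity: multiply goal by d^2
  have hgoal : -(RT) * ((1 - τ) + τ * H) ^ 2 < (RT ^ 2 + dT) * ((1 - τ) + τ * H) ^ 2 := by
    have hid : (RT ^ 2 + dT) * ((1 - τ) + τ * H) ^ 2 + RT * ((1 - τ) + τ * H) ^ 2
        = ((1 - τ) ^ 2 + τ * (1 - τ) * H) * (A ^ 2 + dR + A)
          + (τ ^ 2 * H ^ 2 + τ * (1 - τ) * H) * (B ^ 2 + dB + B) := by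
      linear_combination ((1 - τ) + τ * H) * hk +
        (RT * ((1 - τ) + τ * H) + ((1 - τ) * A + τ * H * B) - τ * (H * (B - A))
          + ((1 - τ) + τ * H)) * hrt'
    linarith [hpos, hid]
  have hsq : (0:ℝ) < ((1 - τ) + τ * H) ^ 2 := by positivity
  have h3 : 0 < (RT ^ 2 + dT + RT) * ((1 - τ) + τ * H) ^ 2 := by
    have h := sub_pos.mpr hgoal
    have he : (RT ^ 2 + dT) * ((1 - τ) + τ * H) ^ 2 - (-RT) * ((1 - τ) + τ * H) ^ 2
        = (RT ^ 2 + dT + RT) * ((1 - τ) + τ * H) ^ 2 := by ring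
    linarith
  rcases mul_pos_iff.mp h3 with ⟨h4, _⟩ | ⟨_, h5⟩
  · linarith
  · linarith
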